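/- Let G be a group acting by homeomorphisms, properly discontinuously and cocompactly, on a locally compact, connected, locally connected, separable metrizable space C, and let Q = C/G be the orbit space with the quotient topology. Then Q is a Peano continuum: Q is compact, connected, locally connected, and metrizable. -/

import Mathlib

open Pointwise

/-- Theorem 5.8: the orbit space of a properly discontinuous, cocompact action
by homeomorphisms on a locally compact, connected, locally connected, separable
metrizable space is a Peano continuum. -/
theorem stmt9 {G C : Type*} [Group G] [TopologicalSpace C] [MulAction G C]
    [LocallyCompactSpace C] [ConnectedSpace C] [LocallyConnectedSpace C]
    [TopologicalSpace.SeparableSpace C] [TopologicalSpace.MetrizableSpace C]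
    (hcont : ∀ g : G, Continuous fun c : C => g • c)
    (hpd : ∀ K L : Set C, IsCompact K → IsCompact L →
      {g : G | (g • K) ∩ L ≠ ∅}.Finite)
    (hcc : ∃ K : Set C, IsCompact K ∧ ⋃ g : G, g • K = Set.univ) :
    CompactSpace (Quotient (MulAction.orbitRel G C)) ∧
      ConnectedSpace (Quotient (MulAction.orbitRel G C)) ∧
      LocallyConnectedSpace (Quotient (MulAction.orbitRel G C)) ∧
      TopologicalSpace.MetrizableSpace (Quotient (MulAction.orbitRel G C)) := by
  haveI : ContinuousConstSMul G C := ⟨hcont⟩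
  haveI : ProperlyDiscontinuousSMul G C :=
    ⟨fun {K L} hK hL => by simp only [Set.nonempty_iff_ne_empty, ne_eq]; exact hpd K L hK hL⟩
  set Q := Quotient (MulAction.orbitRel G C)
  set q : C → Q := Quotient.mk _ with hq
  have hoq : IsOpenQuotientMap q := MulAction.isOpenQuotientMap_quotientMk
  -- surjectivity of q onto Q using cocompactness: q '' K = univ
  obtain ⟨K, hKc, hKu⟩ := hcc
  have himg : q '' K = Set.univ := by
    ext y
    simp only [Set.mem_univ, iff_true]
    obtain ⟨x, rfl⟩ := hoq.surjective y
    have hx : x ∈ ⋃ g : G, g • K := hKu ▸ Set.mem_univ x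
    obtain ⟨g, k, hk, rfl⟩ := Set.mem_iUnion.1 hx
    refine ⟨k, hk, ?_⟩
    exact Quotient.sound ⟨g⁻¹, inv_smul_smul g k⟩
  haveI hcompact : CompactSpace Q := by
    refine ⟨by rw [← himg]; exact hKc.image hoq.continuous⟩
  haveI hconn : ConnectedSpace Q := by
    have : IsConnected (q '' Set.univ) :=
      (isConnected_univ).image q hoq.continuous.continuousOn
    rw [Set.image_univ, hoq.surjective.range_eq] at this
    exact { isPreconnected_univ := this.isPreconnected, toNonempty := ⟨q (Classical.arbitrary C)⟩ }
  haveI hlc : LocallyConnectedSpace Q := by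
    refine locallyConnectedSpace_of_connected_bases
      (fun y s => q '' s)
      (fun y s => IsOpen s ∧ y.out ∈ s ∧ IsConnected s)
      (fun y => ?_) (fun y s hs => ?_)
    · have := (LocallyConnectedSpace.open_connected_basis (y.out : C)).map q
      have hy : q y.out = y := Quotient.out_eq y
      rwa [hoq.map_nhds_eq, hy] at this
    · exact (hs.2.2.image q hoq.continuous.continuousOn).isPreconnected
  haveI : SecondCountableTopology C := by
    letI := TopologicalSpace.metrizableSpaceMetric C
    exact UniformSpace.secondCountable_of_separable C
  haveI : SecondCountableTopology Q := ContinuousConstSMul.secondCountableTopology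
  haveI : T2Space Q := t2Space_of_properlyDiscontinuousSMul_of_t2Space
  exact ⟨hcompact, hconn, hlc, TopologicalSpace.metrizableSpace_of_t3_secondCountable Q⟩
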